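/- Let f : S → T be a minor embedding of rooted trees, and let c be a common ancestor of a and b in S with a directed path a ⇝ b in S being absent and b ⇝ a absent. If c is the lowest common ancestor of a and b, then f(a) and f(b) are incomparable in T, i.e., there is no directed path between f(a) and f(b). -/

import Mathlib

/-- A directed path in a graph `E`, given as a nonempty list of visited nodes
from `a` to `b` (endpoints included). A trivial path is `[a]` with `a = b`. -/
def IsPath {V : Type*} (E : V → V → Prop) (p : List V) (a b : V) : Prop :=
  p.Chain' E ∧ p.head? = some a ∧ p.getLast? = some b

/-- There is a (possibly trivial) directed path from `a` to `b`. -/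
def Reach {V : Type*} (E : V → V → Prop) (a b : V) : Prop :=
  ∃ p : List V, IsPath E p a b

/-- A rooted tree: a finite directed graph with root `r` such that every node is
reachable from `r` by a unique directed path (and there are no self-loops). -/
structure IsRootedTree {V : Type*} [Fintype V] (E : V → V → Prop) (r : V) : Prop where
  no_self : ∀ v, ¬ E v v
  reach : ∀ v, ∃ p : List V, IsPath E p r v
  path_unique : ∀ v (p q : List V), IsPath E p r v → IsPath E q r v → p = q

/-- A minor embedding `f : S → T`: an injective node map such that every arc `(a,b)`
of `S` maps to a directed path from `f a` to `f b` in `T` with no intermediate node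
in the image of `f`. -/
def IsMinorEmb {V W : Type*} (ES : V → V → Prop) (ET : W → W → Prop) (f : V → W) : Prop :=
  Function.Injective f ∧
    ∀ a b, ES a b → ∃ p : List W, IsPath ET p (f a) (f b) ∧
      ∀ x ∈ p.tail.dropLast, x ∉ Set.range f

section Aux
variable {V : Type*} {E : V → V → Prop} {p q : List V} {a b c x : V}

lemma IsPath.ne_nil (h : IsPath E p a b) : p ≠ [] := by
  rintro rfl; simp [IsPath] at h

lemma isPath_singleton (a : V) : IsPath E [a] a a :=
  ⟨List.isChain_singleton a, rfl, rfl⟩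

lemma IsPath.append (hp : IsPath E p a b) (hq : IsPath E q b c) :
    IsPath E (p ++ q.tail) a c := by
  obtain ⟨cp, hph, hpl⟩ := hp
  obtain ⟨cq, hqh, hql⟩ := hq
  cases q with
  | nil => simp at hqh
  | cons z t =>
    obtain rfl : z = b := by simpa using hqh
    cases t with
    | nil =>
      have hbc : z = c := by simpa using hql
      subst hbc
      simpa using ⟨cp, hph, hpl⟩
    | cons w t2 =>
      refine ⟨?_, ?_, ?_⟩
      · show List.IsChain E _; rw [List.isChain_append]
        refine ⟨cp, (List.isChain_cons_cons.mp cq).2, ?_⟩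
        intro u hu v hv
        rw [hpl] at hu
        obtain rfl : z = u := by simpa using hu
        have hv' : w = v := by simpa using hv
        rw [← hv']
        exact (List.isChain_cons_cons.mp cq).1
      · cases p with
        | nil => simp at hph
        | cons ph pt => simpa using hph
      · rw [List.getLast?_append_of_ne_nil _ (by simp)]
        simpa using hql

lemma Reach.refl (a : V) : Reach E a a := ⟨[a], isPath_singleton a⟩

lemma Reach.trans (h1 : Reach E a b) (h2 : Reach E b c) : Reach E a c := by
  obtain ⟨p, hp⟩ := h1; obtain ⟨q, hq⟩ := h2
  exact ⟨_, hp.append hq⟩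

lemma IsPath.split (hp : IsPath E p a b) (hx : x ∈ p) :
    ∃ p₁ p₂, IsPath E p₁ a x ∧ IsPath E p₂ x b ∧ p = p₁ ++ p₂.tail := by
  obtain ⟨cp, hph, hpl⟩ := hp
  obtain ⟨l1, l2, rfl⟩ := List.append_of_mem hx
  refine ⟨l1 ++ [x], x :: l2, ⟨?_, ?_, List.getLast?_concat⟩, ⟨?_, rfl, ?_⟩, by simp⟩
  · exact cp.prefix ⟨l2, by simp⟩
  · match l1 with
    | [] => simpa using hph
    | y :: t => simpa using hph
  · exact cp.suffix ⟨l1, rfl⟩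
  · rw [List.getLast?_append_cons] at hpl; exact hpl

lemma IsPath.reach (hp : IsPath E p a b) : Reach E a b := ⟨p, hp⟩

lemma mem_decomp (l : List V) (hx : x ∈ l) :
    l.head? = some x ∨ l.getLast? = some x ∨ x ∈ l.tail.dropLast := by
  match l with
  | [] => simp at hx
  | h :: t =>
    rcases List.mem_cons.mp hx with rfl | hxt
    · exact Or.inl rfl
    · match t with
      | [] => simp at hxt
      | h2 :: t2 =>
        have hne : (h2 :: t2 : List V) ≠ [] := by simp
        rw [← List.dropLast_append_getLast hne] at hxt
        rcases List.mem_append.mp hxt with h' | h'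
        · exact Or.inr (Or.inr h')
        · obtain rfl : x = (h2 :: t2).getLast hne := by simpa using h'
          exact Or.inr (Or.inl (by
            rw [List.getLast?_cons_cons]
            exact List.getLast?_eq_getLast_of_ne_nil hne))

variable {W : Type*} [Fintype V] {r : V}

lemma reach_antisymm (hT : IsRootedTree E r) (h1 : Reach E a b) (h2 : Reach E b a) :
    a = b := by
  obtain ⟨p, hp⟩ := h1; obtain ⟨q, hq⟩ := h2
  obtain ⟨pr, hpr⟩ := hT.reach a
  have h3 : IsPath E ((pr ++ p.tail) ++ q.tail) r a := (hpr.append hp).append hq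
  have he := hT.path_unique a _ _ h3 hpr
  have hlen := congrArg List.length he
  simp at hlen
  have hp0 : 0 < p.length := List.length_pos_iff.mpr hp.ne_nil
  have hp1 : p.length = 1 := by omega
  obtain ⟨z, rfl⟩ := List.length_eq_one_iff.mp hp1
  have h1 : a = z := by simpa using hp.2.1.symm
  have h2 : b = z := by simpa using hp.2.2.symm
  rw [h1, h2]

lemma mem_of_reach (hT : IsRootedTree E r) (hxy : Reach E x b) (hP : IsPath E p r b) :
    x ∈ p := by
  obtain ⟨q, hq⟩ := hxy
  obtain ⟨pr, hpr⟩ := hT.reach x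
  have := hT.path_unique b _ _ hP (hpr.append hq)
  rw [this]
  have : x ∈ pr := by
    have ⟨h, hx⟩ := List.mem_getLast?_eq_getLast hpr.2.2
    rw [hx]; exact List.getLast_mem h
  exact List.mem_append_left _ this


end Aux

section Main
variable {VS VT : Type*} {ES : VS → VS → Prop} {ET : VT → VT → Prop} {f : VS → VT}

lemma image_path' (hf : IsMinorEmb ES ET f) :
    ∀ (p : List VS) (a b : VS), IsPath ES p a b →
      ∃ P, IsPath ET P (f a) (f b) ∧ ∀ x ∈ P, x ∈ Set.range f → ∃ v ∈ p, f v = x := by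
  intro p
  induction p with
  | nil => intro a b hp; exact absurd rfl hp.ne_nil
  | cons z t ih =>
    intro a b hp
    have hza : z = a := by simpa using hp.2.1
    subst hza
    cases t with
    | nil =>
      have hzb : z = b := by simpa using hp.2.2
      subst hzb
      exact ⟨[f z], isPath_singleton _, by rintro x hx -; simp at hx; exact ⟨z, by simp [hx]⟩⟩
    | cons w t2 =>
      have haw : ES z w := (List.isChain_cons_cons.mp hp.1).1
      have hwb : IsPath ES (w :: t2) w b := by
        refine ⟨(List.isChain_cons_cons.mp hp.1).2, rfl, ?_⟩
        have := hp.2.2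
        rwa [List.getLast?_cons_cons] at this
      obtain ⟨P2, hP2, hm2⟩ := ih w b hwb
      obtain ⟨P1, hP1, hi1⟩ := hf.2 z w haw
      refine ⟨P1 ++ P2.tail, hP1.append hP2, ?_⟩
      intro x hx hxr
      rcases List.mem_append.mp hx with h1 | h2
      · rcases mem_decomp P1 h1 with hh | hl | hint
        · rw [hP1.2.1] at hh
          exact ⟨z, List.mem_cons_self, by injection hh⟩
        · rw [hP1.2.2] at hl
          exact ⟨w, by simp, by injection hl⟩
        · exact absurd hxr (hi1 x hint)
      · obtain ⟨v, hv, hfv⟩ := hm2 x (List.mem_of_mem_tail h2) hxr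
        exact ⟨v, List.mem_cons_of_mem _ hv, hfv⟩

lemma key [Fintype VS] [Fintype VT] {rS : VS} {rT : VT}
    (hS : IsRootedTree ES rS) (hT : IsRootedTree ET rT)
    (hf : IsMinorEmb ES ET f) (a b c : VS)
    (hab : ¬ Reach ES a b)
    (hca : Reach ES c a) (hcb : Reach ES c b) :
    ¬ Reach ET (f a) (f b) := by
  intro hfab
  obtain ⟨pb, hpb⟩ := hcb
  obtain ⟨P, hP, hmem⟩ := image_path' hf pb c b hpb
  obtain ⟨pa, hpa⟩ := hca
  obtain ⟨Pa, hPa, -⟩ := image_path' hf pa c a hpa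
  have rfca : Reach ET (f c) (f a) := hPa.reach
  obtain ⟨R0, hR0⟩ := hT.reach (f c)
  have hRP : IsPath ET (R0 ++ P.tail) rT (f b) := hR0.append hP
  have hfa_mem : f a ∈ R0 ++ P.tail := mem_of_reach hT hfab hRP
  rcases List.mem_append.mp hfa_mem with h1 | h2
  · obtain ⟨p₁, p₂, -, hp₂, -⟩ := hR0.split h1
    have : f a = f c := reach_antisymm hT hp₂.reach rfca
    have hac : a = c := hf.1 this
    exact hab (hac ▸ hpb.reach)
  · obtain ⟨v, hv, hfv⟩ := hmem (f a) (List.mem_of_mem_tail h2) ⟨a, rfl⟩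
    obtain rfl : v = a := hf.1 hfv
    obtain ⟨-, p₂, -, hp₂, -⟩ := hpb.split hv
    exact hab hp₂.reach

end Main

/-- If `c` is the lowest common ancestor of incomparable nodes `a` and `b` in `S`,
then for a minor embedding `f : S → T` the nodes `f a` and `f b` are incomparable
in `T`: there is no directed path between them. -/
theorem stmt7 {VS VT : Type*} [Fintype VS] [Fintype VT]
    (ES : VS → VS → Prop) (rS : VS) (ET : VT → VT → Prop) (rT : VT)
    (hS : IsRootedTree ES rS) (hT : IsRootedTree ET rT)
    (f : VS → VT) (hf : IsMinorEmb ES ET f)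
    (a b c : VS)
    (hab : ¬ Reach ES a b) (hba : ¬ Reach ES b a)
    (hca : Reach ES c a) (hcb : Reach ES c b)
    (hlca : ∀ d : VS, Reach ES d a → Reach ES d b → Reach ES d c) :
    ¬ Reach ET (f a) (f b) ∧ ¬ Reach ET (f b) (f a) :=
  ⟨key hS hT hf a b c hab hca hcb, key hS hT hf b a c hba hcb hca⟩
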